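/- Let g : ℕ → ℝ≥0 satisfy g(n)/log n → 0 as n → ∞, let ε, α > 0 be constants, and for each n ∈ ℕ let τ_n be a natural number with τ_n ≤ n^{0.9} and R_n ⊆ {0,1}^n a set with |R_n| ≥ 2^n / n^{g(n)}. Then there exists N ∈ ℕ such that for all n ≥ N, no mechanism M : {0,1}^n → PMF({0,1}^n) that is (ε, n^{−27})-SDP is α-useful for the nearby-point utility u^NBP_{τ_n, R_n}. -/

import Mathlib

open scoped ENNReal NNReal
set_option maxHeartbeats 1000000

/-- Probability that a sample from `p` lands in `S`. -/
noncomputable def pr {Y : Type*} (p : PMF Y) (S : Set Y) : ℝ :=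
  (p.toOuterMeasure S).toReal

/-- `(ε, δ)`-statistical differential privacy for mechanisms on bit-vector datasets. -/
def IsSDP {ι : Type*} [Fintype ι] {Y : Type*}
    (M : (ι → Bool) → PMF Y) (ε δ : ℝ) : Prop :=
  ∀ x x' : ι → Bool, hammingDist x x' = 1 →
    ∀ S : Set Y, pr (M x) S ≤ Real.exp ε * pr (M x') S + δ

section PrBasics

variable {Y : Type*} [Fintype Y]

lemma pr_eq_sum (p : PMF Y) (S : Set Y) :
    pr p S = ∑ y, Set.indicator S (fun y => (p y).toReal) y := by
  classical
  have h1 : p.toOuterMeasure S = ∑ y, S.indicator p y := by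
    rw [PMF.toOuterMeasure_apply, tsum_fintype]
  rw [pr, h1, ENNReal.toReal_sum]
  · exact Finset.sum_congr rfl fun y _ => by
      by_cases hy : y ∈ S <;> simp [hy]
  · intro a _
    by_cases hy : a ∈ S <;> simp [hy, PMF.apply_ne_top]

lemma pr_nonneg (p : PMF Y) (S : Set Y) : 0 ≤ pr p S := ENNReal.toReal_nonneg

lemma sum_toReal_eq_one (p : PMF Y) : ∑ y, (p y).toReal = 1 := by
  have h := p.tsum_coe
  rw [tsum_fintype] at h
  have := ENNReal.toReal_sum (s := Finset.univ) (f := fun y => p y)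
    (fun a _ => PMF.apply_ne_top p a)
  rw [h] at this
  simpa using this.symm

lemma pr_mono (p : PMF Y) {S T : Set Y} (h : S ⊆ T) : pr p S ≤ pr p T := by
  rw [pr_eq_sum, pr_eq_sum]
  exact Finset.sum_le_sum fun y _ =>
    Set.indicator_le_indicator_of_subset h (fun _ => ENNReal.toReal_nonneg) y

lemma pr_le_one (p : PMF Y) (S : Set Y) : pr p S ≤ 1 := by
  rw [pr_eq_sum]
  calc ∑ y, Set.indicator S (fun y => (p y).toReal) y
      ≤ ∑ y, (p y).toReal :=
        Finset.sum_le_sum fun y _ => Set.indicator_le_self' (fun _ _ => ENNReal.toReal_nonneg) y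
    _ = 1 := sum_toReal_eq_one p

end PrBasics

section Flip

variable {n : ℕ}

def flipF (A : Finset (Fin n)) (x : Fin n → Bool) : Fin n → Bool :=
  fun i => if i ∈ A then !(x i) else x i

lemma flipF_flipF (A : Finset (Fin n)) (x : Fin n → Bool) : flipF A (flipF A x) = x := by
  funext i
  by_cases h : i ∈ A <;> simp [flipF, h]

lemma flip_inj (A : Finset (Fin n)) : Function.Injective (flipF A) := by
  intro a b h
  have := congrArg (flipF A) h
  rwa [flipF_flipF, flipF_flipF] at this

lemma hammingDist_flip (A : Finset (Fin n)) (x : Fin n → Bool) :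
    hammingDist x (flipF A x) = A.card := by
  rw [hammingDist]
  congr 1
  ext i
  by_cases h : i ∈ A
  · simp only [Finset.mem_filter, Finset.mem_univ, true_and, flipF, if_pos h, h, iff_true]
    cases x i <;> simp [h]
  · simp [flipF, if_neg h, h]

lemma flip_ne (A : Finset (Fin n)) (x : Fin n → Bool) {i : Fin n} (hi : i ∈ A) :
    flipF A x i ≠ x i := by
  simp only [flipF, if_pos hi]
  cases x i <;> simp

end Flip

section GroupPrivacy

variable {n : ℕ} {M : (Fin n → Bool) → PMF (Fin n → Bool)} {ε δ : ℝ}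

lemma group_privacy (hM : IsSDP M ε δ) (hε : 0 ≤ ε) (hδ : 0 ≤ δ) :
    ∀ d (x x' : Fin n → Bool), hammingDist x x' ≤ d → ∀ S : Set (Fin n → Bool),
      pr (M x) S ≤ Real.exp (ε * d) * pr (M x') S + d * Real.exp (ε * d) * δ := by
  intro d
  induction d with
  | zero =>
    intro x x' h S
    have hx : x = x' := hammingDist_eq_zero.mp (Nat.le_zero.mp h)
    subst hx
    simp
  | succ d ih =>
    intro x x' h S
    have he1 : (1:ℝ) ≤ Real.exp (ε * (d+1)) := by
      rw [Real.one_le_exp_iff]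
      positivity
    have hee : Real.exp (ε * d) ≤ Real.exp (ε * (d+1)) := by
      apply Real.exp_le_exp.2
      nlinarith
    by_cases hd : hammingDist x x' ≤ d
    · have h1 := ih x x' hd S
      have hp : 0 ≤ pr (M x') S := pr_nonneg _ _
      have h2 : Real.exp (ε * d) * pr (M x') S ≤ Real.exp (ε * (d+1)) * pr (M x') S :=
        mul_le_mul_of_nonneg_right hee hp
      have h3 : (d:ℝ) * Real.exp (ε * d) * δ ≤ (d+1) * Real.exp (ε * (d+1)) * δ := by
        apply mul_le_mul_of_nonneg_right _ hδ
        have : (d:ℝ) ≤ (d:ℝ)+1 := by linarith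
        nlinarith [Real.exp_pos (ε * d)]
      push_cast
      push_cast at h1
      linarith
    · have hd1 : hammingDist x x' = d + 1 := le_antisymm h (by omega)
      have hne : ∃ i, x i ≠ x' i := by
        by_contra hc
        push_neg at hc
        have : x = x' := funext hc
        subst this
        simp [hammingDist_eq_zero] at hd1
      obtain ⟨i, hi⟩ := hne
      set x'' := Function.update x i (x' i) with hx''
      have hdist1 : hammingDist x x'' = 1 := by
        rw [hammingDist]
        have : ({j | x j ≠ x'' j} : Finset (Fin n)) = {i} := by
          ext j
          simp only [Finset.mem_filter, Finset.mem_univ, true_and, Finset.mem_singleton]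
          by_cases hj : j = i
          · subst hj
            simp [hx'', Function.update_self, hi]
          · simp [hx'', Function.update_of_ne hj, hj]
        rw [this, Finset.card_singleton]
      have hdist2 : hammingDist x'' x' ≤ d := by
        have hset : ({j | x'' j ≠ x' j} : Finset (Fin n))
            = ({j | x j ≠ x' j} : Finset (Fin n)).erase i := by
          ext j
          simp only [Finset.mem_filter, Finset.mem_univ, true_and, Finset.mem_erase]
          by_cases hj : j = i
          · subst hj
            simp [hx'', Function.update_self]
          · simp [hx'', Function.update_of_ne hj, hj]
        have : hammingDist x'' x' = (({j | x j ≠ x' j} : Finset (Fin n)).erase i).card := by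
          rw [hammingDist, hset]
        rw [this]
        have hi' : i ∈ ({j | x j ≠ x' j} : Finset (Fin n)) := by
          simp [hi]
        rw [Finset.card_erase_of_mem hi']
        have : (({j | x j ≠ x' j} : Finset (Fin n)).card) = d + 1 := hd1
        omega
      have hstep := hM x x'' hdist1 S
      have hrest := ih x'' x' hdist2 S
      have hp : 0 ≤ pr (M x') S := pr_nonneg _ _
      have hexp : Real.exp ε * Real.exp (ε * d) = Real.exp (ε * (d+1)) := by
        rw [← Real.exp_add]
        ring_nf
      calc pr (M x) S ≤ Real.exp ε * pr (M x'') S + δ := hstep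
        _ ≤ Real.exp ε * (Real.exp (ε * d) * pr (M x') S + d * Real.exp (ε * d) * δ) + δ := by
            apply add_le_add_left
            exact mul_le_mul_of_nonneg_left hrest (Real.exp_pos ε).le
        _ = Real.exp (ε * (d+1)) * pr (M x') S + (d:ℝ) * Real.exp (ε * (d+1)) * δ + δ := by
            rw [← hexp]; ring
        _ ≤ Real.exp (ε * (d+1)) * pr (M x') S + ((d:ℝ)+1) * Real.exp (ε * (d+1)) * δ := by
            nlinarith
        _ = Real.exp (ε * ((d:ℕ)+1:ℕ)) * pr (M x') S + (((d:ℕ)+1:ℕ):ℝ) * Real.exp (ε * ((d:ℕ)+1:ℕ)) * δ := by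
            push_cast
            ring_nf

end GroupPrivacy

section Counting

attribute [local instance] Classical.propDecidable

variable {n : ℕ}

/-- nearby outputs agreeing with `x` on `A` -/
def Gset (τ' : ℕ) (x : Fin n → Bool) (A : Finset (Fin n)) : Set (Fin n → Bool) :=
  {y | hammingDist x y ≤ τ' ∧ ∀ i ∈ A, y i = x i}

/-- outputs within `t` of `z` disagreeing with `z` on all of `A` -/
def Bset (t : ℕ) (z : Fin n → Bool) (A : Finset (Fin n)) : Set (Fin n → Bool) :=
  {y | hammingDist z y ≤ t ∧ ∀ i ∈ A, y i ≠ z i}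

lemma card_eqFilter (x y : Fin n → Bool) :
    (Finset.filter (fun i => y i = x i) Finset.univ).card = n - hammingDist x y := by
  classical
  have h := Finset.card_filter_add_card_filter_not
    (s := (Finset.univ : Finset (Fin n))) (p := fun i => x i ≠ y i)
  have h2 : (Finset.filter (fun i => ¬ (x i ≠ y i)) Finset.univ)
      = Finset.filter (fun i => y i = x i) Finset.univ := by
    apply Finset.filter_congr
    intro i _
    simp [eq_comm, not_ne_iff]
  rw [h2] at h
  have hd : (Finset.filter (fun i => x i ≠ y i) Finset.univ).card = hammingDist x y := by
    rw [hammingDist]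
  simp only [Finset.card_univ, Fintype.card_fin] at h
  omega

lemma countG (k τ' : ℕ) (x y : Fin n → Bool) (hy : hammingDist x y ≤ τ') :
    ((Finset.powersetCard k (Finset.univ : Finset (Fin n))).filter
        (fun A => y ∈ Gset τ' x A)).card = (n - hammingDist x y).choose k := by
  have h1 : (Finset.powersetCard k (Finset.univ : Finset (Fin n))).filter
        (fun A => y ∈ Gset τ' x A)
      = Finset.powersetCard k (Finset.filter (fun i => y i = x i) Finset.univ) := by
    ext A
    simp only [Finset.mem_filter, Finset.mem_powersetCard, Gset, Set.mem_setOf_eq]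
    constructor
    · rintro ⟨⟨-, hcard⟩, -, hAll⟩
      exact ⟨fun i hi => Finset.mem_filter.mpr ⟨Finset.mem_univ i, hAll i hi⟩, hcard⟩
    · rintro ⟨hsub, hcard⟩
      exact ⟨⟨Finset.subset_univ A, hcard⟩, hy, fun i hi => (Finset.mem_filter.mp (hsub hi)).2⟩
  rw [h1, Finset.card_powersetCard, card_eqFilter]

lemma countB (k : ℕ) (z y : Fin n → Bool) :
    ((Finset.powersetCard k (Finset.univ : Finset (Fin n))).filter
        (fun A => ∀ i ∈ A, y i ≠ z i)).card = (hammingDist z y).choose k := by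
  have h1 : (Finset.powersetCard k (Finset.univ : Finset (Fin n))).filter
        (fun A => ∀ i ∈ A, y i ≠ z i)
      = Finset.powersetCard k (Finset.filter (fun i => z i ≠ y i) Finset.univ) := by
    ext A
    simp only [Finset.mem_filter, Finset.mem_powersetCard]
    constructor
    · rintro ⟨⟨-, hcard⟩, hAll⟩
      exact ⟨fun i hi => Finset.mem_filter.mpr ⟨Finset.mem_univ i, (hAll i hi).symm⟩, hcard⟩
    · rintro ⟨hsub, hcard⟩
      exact ⟨⟨Finset.subset_univ A, hcard⟩, fun i hi => ((Finset.mem_filter.mp (hsub hi)).2).symm⟩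
  rw [h1, Finset.card_powersetCard]
  have h2 : (Finset.filter (fun i => z i ≠ y i) Finset.univ).card = hammingDist z y := by
    rw [hammingDist]
  rw [h2]

lemma sum_pr_eq {Y ι : Type*} [Fintype Y] (p : PMF Y) (F : Finset ι) (T : ι → Set Y) :
    ∑ A ∈ F, pr p (T A)
      = ∑ y, (p y).toReal * ((F.filter (fun A => y ∈ T A)).card : ℝ) := by
  simp_rw [pr_eq_sum]
  rw [Finset.sum_comm]
  refine Finset.sum_congr rfl fun y _ => ?_
  rw [← Finset.sum_filter_add_sum_filter_not F (fun A => y ∈ T A)]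
  have h1 : ∑ A ∈ F.filter (fun A => y ∈ T A), Set.indicator (T A) (fun y => (p y).toReal) y
      = ∑ A ∈ F.filter (fun A => y ∈ T A), (p y).toReal := by
    refine Finset.sum_congr rfl fun A hA => ?_
    rw [Set.indicator_of_mem (Finset.mem_filter.mp hA).2]
  have h2 : ∑ A ∈ F.filter (fun A => ¬ y ∈ T A), Set.indicator (T A) (fun y => (p y).toReal) y
      = 0 := by
    refine Finset.sum_eq_zero fun A hA => ?_
    rw [Set.indicator_of_notMem (Finset.mem_filter.mp hA).2]
  rw [h1, h2, Finset.sum_const, nsmul_eq_mul]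
  ring

end Counting

section Key

attribute [local instance] Classical.propDecidable

lemma key_ineq (n k τ' : ℕ) (ε δ α : ℝ) (hε : 0 ≤ ε) (hδ : 0 ≤ δ)
    (Rn : Finset (Fin n → Bool)) (M : (Fin n → Bool) → PMF (Fin n → Bool))
    (hSDP : IsSDP M ε δ)
    (hball : ∀ x ∈ Rn, α ≤ pr (M x) {y | hammingDist x y ≤ τ'}) :
    α * ((n - τ').choose k : ℝ) * (Rn.card : ℝ) ≤
      Real.exp (ε * k) * (2^n * ((τ' + k).choose k : ℝ))
      + (Rn.card : ℝ) * (n.choose k : ℝ) * ((k : ℝ) * Real.exp (ε * k) * δ) := by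
  set 𝒜 := Finset.powersetCard k (Finset.univ : Finset (Fin n)) with h𝒜
  set C1 : ℝ := ((n - τ').choose k : ℝ) with hC1
  set C2 : ℝ := ((τ' + k).choose k : ℝ) with hC2
  have hC1nn : (0:ℝ) ≤ C1 := by positivity
  have hexpnn : (0:ℝ) < Real.exp (ε * k) := Real.exp_pos _
  -- utility lower bound
  have hU : ∀ x ∈ Rn, α * C1 ≤ ∑ A ∈ 𝒜, pr (M x) (Gset τ' x A) := by
    intro x hx
    have hxball := hball x hx
    have hprnn : 0 ≤ pr (M x) {y | hammingDist x y ≤ τ'} := pr_nonneg _ _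
    have h0 : pr (M x) {y | hammingDist x y ≤ τ'} * C1 ≤ ∑ A ∈ 𝒜, pr (M x) (Gset τ' x A) := by
      rw [sum_pr_eq, pr_eq_sum, Finset.sum_mul]
      refine Finset.sum_le_sum fun y _ => ?_
      by_cases hy : hammingDist x y ≤ τ'
      · rw [Set.indicator_of_mem (by exact hy : y ∈ {y | hammingDist x y ≤ τ'})]
        rw [h𝒜, countG k τ' x y hy]
        have hcc : ((n - τ').choose k : ℝ) ≤ ((n - hammingDist x y).choose k : ℝ) := by
          exact_mod_cast Nat.choose_le_choose k (Nat.sub_le_sub_left hy n)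
        exact mul_le_mul_of_nonneg_left hcc ENNReal.toReal_nonneg
      · rw [Set.indicator_of_notMem (by exact hy : y ∉ {y | hammingDist x y ≤ τ'})]
        rw [zero_mul]
        positivity
    calc α * C1 ≤ pr (M x) {y | hammingDist x y ≤ τ'} * C1 :=
          mul_le_mul_of_nonneg_right hxball hC1nn
      _ ≤ _ := h0
  -- bad-set upper bound
  have hB : ∀ z : Fin n → Bool, ∑ A ∈ 𝒜, pr (M z) (Bset (τ' + k) z A) ≤ C2 := by
    intro z
    rw [sum_pr_eq]
    calc ∑ y, ((M z) y).toReal * (((𝒜.filter (fun A => y ∈ Bset (τ' + k) z A)).card : ℕ) : ℝ)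
        ≤ ∑ y, ((M z) y).toReal * C2 := by
          refine Finset.sum_le_sum fun y _ => ?_
          refine mul_le_mul_of_nonneg_left ?_ ENNReal.toReal_nonneg
          rw [hC2]
          by_cases hy : hammingDist z y ≤ τ' + k
          · have hsub : 𝒜.filter (fun A => y ∈ Bset (τ' + k) z A)
                ⊆ 𝒜.filter (fun A => ∀ i ∈ A, y i ≠ z i) := by
              intro A hA
              rw [Finset.mem_filter] at hA ⊢
              exact ⟨hA.1, fun i hi => hA.2.2 i hi⟩
            have hcard := Finset.card_le_card hsub
            rw [h𝒜, countB k z y] at hcard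
            have : (hammingDist z y).choose k ≤ (τ' + k).choose k :=
              Nat.choose_le_choose k hy
            exact_mod_cast hcard.trans this
          · have hempty : 𝒜.filter (fun A => y ∈ Bset (τ' + k) z A) = ∅ := by
              refine Finset.filter_false_of_mem fun A _ => ?_
              exact fun h => hy h.1
            rw [hempty]
            simp
      _ = C2 := by rw [← Finset.sum_mul, sum_toReal_eq_one, one_mul]
  -- group privacy step
  have hstep : ∀ x : Fin n → Bool, ∀ A ∈ 𝒜, pr (M x) (Gset τ' x A) ≤
      Real.exp (ε * k) * pr (M (flipF A x)) (Bset (τ' + k) (flipF A x) A)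
        + (k : ℝ) * Real.exp (ε * k) * δ := by
    intro x A hA
    have hAcard : A.card = k := (Finset.mem_powersetCard.mp hA).2
    have hd : hammingDist x (flipF A x) ≤ k := by
      rw [hammingDist_flip, hAcard]
    have hgp := group_privacy hSDP hε hδ k x (flipF A x) hd (Gset τ' x A)
    have hsub : Gset τ' x A ⊆ Bset (τ' + k) (flipF A x) A := by
      rintro y ⟨hy1, hy2⟩
      constructor
      · calc hammingDist (flipF A x) y ≤ hammingDist (flipF A x) x + hammingDist x y :=
              hammingDist_triangle _ _ _
          _ ≤ k + τ' := by
              have : hammingDist (flipF A x) x = k := by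
                rw [hammingDist_comm, hammingDist_flip, hAcard]
              omega
          _ = τ' + k := by omega
      · intro i hi hc
        exact flip_ne A x hi (hc.symm.trans (hy2 i hi))
    have hmono : pr (M (flipF A x)) (Gset τ' x A)
        ≤ pr (M (flipF A x)) (Bset (τ' + k) (flipF A x) A) := pr_mono _ hsub
    calc pr (M x) (Gset τ' x A)
        ≤ Real.exp (ε * k) * pr (M (flipF A x)) (Gset τ' x A)
          + (k : ℝ) * Real.exp (ε * k) * δ := hgp
      _ ≤ _ := by
          have := mul_le_mul_of_nonneg_left hmono hexpnn.le
          linarith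
  -- summed bad bound
  have hBadSum : ∑ x ∈ Rn, ∑ A ∈ 𝒜, pr (M (flipF A x)) (Bset (τ' + k) (flipF A x) A)
      ≤ (2:ℝ)^n * C2 := by
    rw [Finset.sum_comm]
    have hA' : ∀ A ∈ 𝒜, ∑ x ∈ Rn, pr (M (flipF A x)) (Bset (τ' + k) (flipF A x) A)
        ≤ ∑ z, pr (M z) (Bset (τ' + k) z A) := by
      intro A _
      have himg : ∑ x ∈ Rn, pr (M (flipF A x)) (Bset (τ' + k) (flipF A x) A)
          = ∑ z ∈ Rn.image (flipF A), pr (M z) (Bset (τ' + k) z A) := by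
        rw [Finset.sum_image (fun x _ y _ h => flip_inj A h)]
      rw [himg]
      exact Finset.sum_le_sum_of_subset_of_nonneg (Finset.subset_univ _)
        (fun z _ _ => pr_nonneg _ _)
    calc ∑ A ∈ 𝒜, ∑ x ∈ Rn, pr (M (flipF A x)) (Bset (τ' + k) (flipF A x) A)
        ≤ ∑ A ∈ 𝒜, ∑ z, pr (M z) (Bset (τ' + k) z A) := Finset.sum_le_sum hA'
      _ = ∑ z, ∑ A ∈ 𝒜, pr (M z) (Bset (τ' + k) z A) := by rw [Finset.sum_comm]
      _ ≤ ∑ _z : Fin n → Bool, C2 := Finset.sum_le_sum fun z _ => hB z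
      _ = (2:ℝ)^n * C2 := by
          rw [Finset.sum_const, nsmul_eq_mul, Finset.card_univ]
          norm_num [Fintype.card_fun]
  -- cardinality of the index set
  have h𝒜card : (𝒜.card : ℝ) = (n.choose k : ℝ) := by
    rw [h𝒜, Finset.card_powersetCard]
    norm_num
  -- main chain
  calc α * C1 * (Rn.card : ℝ) = ∑ _x ∈ Rn, α * C1 := by
        rw [Finset.sum_const, nsmul_eq_mul]; ring
    _ ≤ ∑ x ∈ Rn, ∑ A ∈ 𝒜, pr (M x) (Gset τ' x A) := Finset.sum_le_sum hU
    _ ≤ ∑ x ∈ Rn, ∑ A ∈ 𝒜, (Real.exp (ε * k) * pr (M (flipF A x)) (Bset (τ' + k) (flipF A x) A)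
          + (k : ℝ) * Real.exp (ε * k) * δ) :=
        Finset.sum_le_sum fun x _ => Finset.sum_le_sum fun A hA => hstep x A hA
    _ = Real.exp (ε * k) * (∑ x ∈ Rn, ∑ A ∈ 𝒜, pr (M (flipF A x)) (Bset (τ' + k) (flipF A x) A))
          + (Rn.card : ℝ) * (𝒜.card : ℝ) * ((k : ℝ) * Real.exp (ε * k) * δ) := by
        simp only [Finset.sum_add_distrib, Finset.sum_const, nsmul_eq_mul, Finset.mul_sum]
        ring
    _ ≤ Real.exp (ε * k) * ((2:ℝ)^n * C2)
          + (Rn.card : ℝ) * (n.choose k : ℝ) * ((k : ℝ) * Real.exp (ε * k) * δ) := by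
        have h1 := mul_le_mul_of_nonneg_left hBadSum hexpnn.le
        rw [h𝒜card]
        linarith

end Key

lemma choose_ratio (a b k : ℕ) :
    a.choose k * (b + 1 - k)^k ≤ b.choose k * a^k := by
  have h1 : (b + 1 - k)^k ≤ b.descFactorial k := Nat.pow_sub_le_descFactorial b k
  have h2 : a.descFactorial k ≤ a^k := Nat.descFactorial_le_pow a k
  have e1 : a.descFactorial k = k.factorial * a.choose k :=
    Nat.descFactorial_eq_factorial_mul_choose a k
  have e2 : b.descFactorial k = k.factorial * b.choose k :=
    Nat.descFactorial_eq_factorial_mul_choose b k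
  have key : k.factorial * (a.choose k * (b + 1 - k)^k) ≤ k.factorial * (b.choose k * a^k) := by
    calc k.factorial * (a.choose k * (b + 1 - k)^k)
        = a.descFactorial k * (b + 1 - k)^k := by rw [e1]; ring
      _ ≤ a.descFactorial k * b.descFactorial k := Nat.mul_le_mul_left _ h1
      _ ≤ a^k * b.descFactorial k := Nat.mul_le_mul_right _ h2
      _ = k.factorial * (b.choose k * a^k) := by rw [e2]; ring
  exact Nat.le_of_mul_le_mul_left key (Nat.factorial_pos k)

lemma fixed_n (n τ' : ℕ) (gn ε α : ℝ) (hε : 0 < ε) (hα : 0 < α) (hgn : 0 ≤ gn)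
    (Rn : Finset (Fin n → Bool))
    (hτ : (τ' : ℝ) ≤ (n:ℝ) ^ (0.9 : ℝ))
    (hRn : (2:ℝ)^n / (n:ℝ) ^ gn ≤ (Rn.card : ℝ))
    (h1 : gn / Real.log n < 1/(40*(ε+1)))
    (h2 : 20*(Real.log 8 + ε) ≤ Real.log n) (h2b : 2*(ε+1) ≤ Real.log n)
    (h3 : (2:ℝ)^(30:ℕ) ≤ (n:ℝ)) (h3b : 1600 + 2/α ≤ (n:ℝ))
    (M : (Fin n → Bool) → PMF (Fin n → Bool))
    (hSDP : IsSDP M ε (1/(n:ℝ)^(27:ℕ)))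
    (huse : ∀ x, α ≤ pr (M x) {y | hammingDist x y ≤ τ' ∨ x ∉ (Rn : Set (Fin n → Bool))}) :
    False := by
  have pr_nonneg : ∀ {Y : Type} (p : PMF Y) (S : Set Y), 0 ≤ pr p S :=
    fun p S => ENNReal.toReal_nonneg
  set N := (n:ℝ) with hNdef
  set L := Real.log N with hLdef
  have hN1600 : (1600:ℝ) ≤ N := by
    have : (0:ℝ) ≤ 2/α := by positivity
    linarith
  have hN0 : (0:ℝ) < N := by linarith
  have hN1 : (1:ℝ) < N := by linarith
  have hL : (0:ℝ) < L := Real.log_pos hN1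
  -- sqrt facts
  have hsp : (0:ℝ) < Real.sqrt N := Real.sqrt_pos.2 hN0
  have hsqmul : Real.sqrt N * Real.sqrt N = N := Real.mul_self_sqrt hN0.le
  have hs40 : (40:ℝ) ≤ Real.sqrt N := by
    nlinarith [Real.sq_sqrt hN0.le, Real.sqrt_nonneg N]
  have hLsqrt : L ≤ 2 * Real.sqrt N := by
    have hlog2 : L = 2 * Real.log (Real.sqrt N) := by
      rw [hLdef, ← hsqmul, Real.log_mul hsp.ne' hsp.ne']
      rw [hsqmul]
      ring
    have := Real.log_le_sub_one_of_pos hsp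
    linarith
  -- the parameter k
  set k : ℕ := 20 * (⌈gn⌉₊ + 1) with hkdef
  have hkcast : (k:ℝ) = 20 * ((⌈gn⌉₊:ℝ) + 1) := by rw [hkdef]; push_cast; ring
  have hceil1 : gn ≤ (⌈gn⌉₊:ℝ) := Nat.le_ceil gn
  have hceil2 : (⌈gn⌉₊:ℝ) ≤ gn + 1 := (Nat.ceil_lt_add_one hgn).le
  have hε1 : (0:ℝ) < ε + 1 := by linarith
  have hgnL : gn < L * (1/(40*(ε+1))) := by
    have := (div_lt_iff₀ hL).1 h1
    linarith [this]
  have hkL : (k:ℝ) ≤ L/(2*(ε+1)) + 40 := by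
    rw [hkcast]
    have h40 : 20 * (gn + 2) ≤ 20 * (L * (1/(40*(ε+1)))) + 40 := by nlinarith
    have : 20 * (L * (1/(40*(ε+1)))) = L/(2*(ε+1)) := by
      field_simp
      ring
    nlinarith
  have hkL' : (k:ℝ) ≤ L + 40 := by
    have h1' : L/(2*(ε+1)) ≤ L/2 := by
      apply div_le_div_of_nonneg_left hL.le ?_ ?_ <;> linarith
    have : L/2 ≤ L := by linarith
    linarith
  have hksqrt : (k:ℝ) ≤ 3 * Real.sqrt N := by linarith
  have hkN : (k:ℝ) ≤ N := by
    have h3s : (3:ℝ) ≤ Real.sqrt N := by linarith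
    have hmul := mul_le_mul_of_nonneg_right h3s (Real.sqrt_nonneg N)
    rw [hsqmul] at hmul
    linarith
  -- rpow facts
  have hsqrt_rpow : Real.sqrt N ≤ N ^ (0.9:ℝ) := by
    rw [Real.sqrt_eq_rpow]
    apply Real.rpow_le_rpow_of_exponent_le hN1.le
    norm_num
  have hτk4 : (τ':ℝ) + (k:ℝ) ≤ 4 * N ^ (0.9:ℝ) := by
    have : (k:ℝ) ≤ 3 * N ^ (0.9:ℝ) := by nlinarith
    linarith [hτ]
  have hN01 : (8:ℝ) ≤ N ^ (0.1:ℝ) := by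
    have hstep : ((2:ℝ)^(30:ℕ)) ^ (0.1:ℝ) ≤ N ^ (0.1:ℝ) :=
      Real.rpow_le_rpow (by positivity) h3 (by norm_num)
    have hval : ((2:ℝ)^(30:ℕ)) ^ (0.1:ℝ) = 8 := by
      rw [← Real.rpow_natCast 2 30, ← Real.rpow_mul (by norm_num : (0:ℝ) ≤ 2)]
      norm_num
    linarith [hval ▸ hstep]
  have hrpow_mul : N ^ (0.9:ℝ) * N ^ (0.1:ℝ) = N := by
    rw [← Real.rpow_add hN0]
    norm_num
  have hhalf : (τ':ℝ) + (k:ℝ) ≤ N/2 := by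
    have h8 : 8 * (N ^ (0.9:ℝ)) ≤ N := by
      have h9 : (0:ℝ) ≤ N ^ (0.9:ℝ) := by positivity
      nlinarith
    nlinarith
  have hτkn : τ' + k ≤ n := by
    have : (τ':ℝ) + (k:ℝ) ≤ N := by linarith
    exact_mod_cast (by push_cast; linarith : ((τ' + k : ℕ):ℝ) ≤ (n:ℝ))
  -- naturals b, m
  set b : ℕ := n - τ' with hbdef
  have hkb : k ≤ b := by omega
  set m : ℕ := b + 1 - k with hmdef
  have hmcast : (m:ℝ) = N - (τ':ℝ) + 1 - (k:ℝ) := by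
    rw [hmdef, hbdef]
    have h1' : k ≤ n - τ' + 1 := by omega
    have h2' : τ' ≤ n := by omega
    push_cast [Nat.cast_sub h1', Nat.cast_sub h2']
    ring
  have hm2 : N/2 ≤ (m:ℝ) := by rw [hmcast]; linarith
  have hmpos : (0:ℝ) < (m:ℝ) := by linarith
  -- use the hypothesis
  have hball : ∀ x ∈ Rn, α ≤ pr (M x) {y | hammingDist x y ≤ τ'} := by
    intro x hx
    have h := huse x
    have hset : {y | hammingDist x y ≤ τ' ∨ x ∉ (Rn : Set (Fin n → Bool))}
        = {y | hammingDist x y ≤ τ'} := by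
      ext y
      simp [hx]
    rwa [hset] at h
  set δ : ℝ := 1/(n:ℝ)^(27:ℕ) with hδdef
  have hδ0 : 0 ≤ δ := by positivity
  have KEY := key_ineq n k τ' ε δ α hε.le hδ0 Rn M hSDP hball
  -- cast ratio bounds
  set C1 : ℝ := (b.choose k : ℝ) with hC1def
  set C2 : ℝ := ((τ' + k).choose k : ℝ) with hC2def
  have hC1pos : (0:ℝ) < C1 := by
    rw [hC1def]
    exact_mod_cast Nat.choose_pos hkb
  have hr1 : C2 * (m:ℝ)^k ≤ C1 * ((τ':ℝ) + (k:ℝ))^k := by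
    have := choose_ratio (τ' + k) b k
    rw [← hmdef] at this
    have hcast : (((τ' + k).choose k * m ^ k : ℕ) : ℝ) ≤ ((b.choose k * (τ' + k)^k : ℕ) : ℝ) :=
      Nat.cast_le.2 this
    push_cast at hcast
    rw [hC2def, hC1def]
    push_cast
    linarith
  have hr2 : ((n.choose k : ℕ):ℝ) * (m:ℝ)^k ≤ C1 * N^k := by
    have := choose_ratio n b k
    rw [← hmdef] at this
    have hcast : ((n.choose k * m ^ k : ℕ) : ℝ) ≤ ((b.choose k * n^k : ℕ) : ℝ) :=
      Nat.cast_le.2 this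
    push_cast at hcast
    rw [hC1def]
    push_cast
    linarith
  -- R card bounds
  have hNg : (0:ℝ) < N ^ gn := Real.rpow_pos_of_pos hN0 gn
  have hRpos : (0:ℝ) < (Rn.card : ℝ) := lt_of_lt_of_le (by positivity) hRn
  have h2n : (2:ℝ)^n ≤ (Rn.card : ℝ) * N ^ gn := by
    rw [div_le_iff₀ hNg] at hRn
    linarith
  -- quotients
  set E : ℝ := Real.exp (ε * k) with hEdef
  have hEpos : (0:ℝ) < E := Real.exp_pos _
  set q1 : ℝ := ((τ':ℝ) + (k:ℝ))/(m:ℝ) with hq1def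
  set q2 : ℝ := N/(m:ℝ) with hq2def
  have hq1nn : 0 ≤ q1 := by
    rw [hq1def]
    have h0 : (0:ℝ) ≤ (τ':ℝ) + (k:ℝ) :=
      add_nonneg (Nat.cast_nonneg τ') (Nat.cast_nonneg k)
    exact div_nonneg h0 hmpos.le
  have hq2nn : 0 ≤ q2 := div_nonneg hN0.le hmpos.le
  have hmk : (0:ℝ) < (m:ℝ)^k := pow_pos hmpos k
  have hC2le : C2 ≤ C1 * q1^k := by
    have heq : C1 * q1^k = (C1 * ((τ':ℝ) + (k:ℝ))^k)/(m:ℝ)^k := by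
      rw [hq1def, div_pow]; ring
    rw [heq, le_div_iff₀ hmk]
    exact hr1
  have hnCkle : ((n.choose k : ℕ):ℝ) ≤ C1 * q2^k := by
    have heq : C1 * q2^k = (C1 * N^k)/(m:ℝ)^k := by
      rw [hq2def, div_pow]; ring
    rw [heq, le_div_iff₀ hmk]
    exact hr2
  -- divide KEY through by C1 * Rn.card
  have hq1k : (0:ℝ) ≤ q1^k := pow_nonneg hq1nn k
  have hq2k : (0:ℝ) ≤ q2^k := pow_nonneg hq2nn k
  have hkEδ : (0:ℝ) ≤ (k:ℝ) * E * δ :=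
    mul_nonneg (mul_nonneg (Nat.cast_nonneg k) hEpos.le) hδ0
  have hC2nn : (0:ℝ) ≤ C2 := by rw [hC2def]; exact Nat.cast_nonneg _
  have halpha : α ≤ E * N^gn * q1^k + q2^k * ((k:ℝ) * E * δ) := by
    have hup1 : E * ((2:ℝ)^n * C2) ≤ (E * N^gn * q1^k) * (C1 * (Rn.card:ℝ)) := by
      have hA : (2:ℝ)^n * C2 ≤ ((Rn.card:ℝ) * N^gn) * (C1 * q1^k) := by
        apply mul_le_mul h2n hC2le hC2nn
        exact mul_nonneg hRpos.le hNg.le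
      calc E * ((2:ℝ)^n * C2) ≤ E * (((Rn.card:ℝ) * N^gn) * (C1 * q1^k)) :=
            mul_le_mul_of_nonneg_left hA hEpos.le
        _ = (E * N^gn * q1^k) * (C1 * (Rn.card:ℝ)) := by ring
    have hup2 : (Rn.card:ℝ) * ((n.choose k : ℕ):ℝ) * ((k:ℝ) * E * δ)
        ≤ (q2^k * ((k:ℝ) * E * δ)) * (C1 * (Rn.card:ℝ)) := by
      have hB : (Rn.card:ℝ) * ((n.choose k : ℕ):ℝ) ≤ (Rn.card:ℝ) * (C1 * q2^k) :=
        mul_le_mul_of_nonneg_left hnCkle hRpos.le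
      calc (Rn.card:ℝ) * ((n.choose k : ℕ):ℝ) * ((k:ℝ) * E * δ)
          ≤ (Rn.card:ℝ) * (C1 * q2^k) * ((k:ℝ) * E * δ) :=
            mul_le_mul_of_nonneg_right hB hkEδ
        _ = (q2^k * ((k:ℝ) * E * δ)) * (C1 * (Rn.card:ℝ)) := by ring
    have hC1R : (0:ℝ) < C1 * (Rn.card:ℝ) := mul_pos hC1pos hRpos
    have hfinal : α * (C1 * (Rn.card:ℝ))
        ≤ (E * N^gn * q1^k + q2^k * ((k:ℝ) * E * δ)) * (C1 * (Rn.card:ℝ)) := by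
      calc α * (C1 * (Rn.card:ℝ)) = α * C1 * (Rn.card:ℝ) := by ring
        _ ≤ E * ((2:ℝ)^n * C2) + (Rn.card:ℝ) * ((n.choose k : ℕ):ℝ) * ((k:ℝ) * E * δ) := KEY
        _ ≤ (E * N^gn * q1^k) * (C1 * (Rn.card:ℝ))
              + (q2^k * ((k:ℝ) * E * δ)) * (C1 * (Rn.card:ℝ)) := add_le_add hup1 hup2
        _ = (E * N^gn * q1^k + q2^k * ((k:ℝ) * E * δ)) * (C1 * (Rn.card:ℝ)) := by ring
    exact le_of_mul_le_mul_right hfinal hC1R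
  -- bound the first term by 1/N
  have hq1exp : q1 ≤ Real.exp (Real.log 8 + L*0.9 - L) := by
    have hq1b : q1 ≤ 4 * N^(0.9:ℝ)/(N/2) := by
      rw [hq1def]
      apply div_le_div₀ (by positivity) hτk4 (by positivity) hm2
    have heq : 4 * N^(0.9:ℝ)/(N/2) = 8 * N^(0.9:ℝ)/N := by
      field_simp
      ring
    have hexp8 : Real.exp (Real.log 8 + L*0.9 - L) = 8 * N^(0.9:ℝ)/N := by
      rw [Real.exp_sub, Real.exp_add, Real.exp_log (by norm_num : (0:ℝ) < 8)]
      rw [show N^(0.9:ℝ) = Real.exp (L * 0.9) by rw [Real.rpow_def_of_pos hN0, hLdef]]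
      rw [show Real.exp L = N by rw [hLdef, Real.exp_log hN0]]
    rw [hexp8, ← heq]
    exact hq1b
  have hT1 : E * N^gn * q1^k ≤ 1/N := by
    have hNgn : N^gn = Real.exp (L * gn) := by rw [Real.rpow_def_of_pos hN0, hLdef]
    have hq1kexp : q1^k ≤ Real.exp ((k:ℝ) * (Real.log 8 + L*0.9 - L)) := by
      calc q1^k ≤ (Real.exp (Real.log 8 + L*0.9 - L))^k := pow_le_pow_left₀ hq1nn hq1exp k
        _ = Real.exp ((k:ℝ) * (Real.log 8 + L*0.9 - L)) := (Real.exp_nat_mul _ k).symm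
    have hprod : E * N^gn = Real.exp (ε*(k:ℝ) + L*gn) := by
      rw [hEdef, hNgn, ← Real.exp_add]
    have hcomb : E * N^gn * q1^k ≤ Real.exp (ε*(k:ℝ) + L*gn + (k:ℝ)*(Real.log 8 + L*0.9 - L)) := by
      rw [Real.exp_add (ε*(k:ℝ) + L*gn) _, ← hprod]
      exact mul_le_mul_of_nonneg_left hq1kexp (by positivity)
    have hf1 : (k:ℝ)*(Real.log 8 + ε) ≤ 0.05*((k:ℝ)*L) := by
      have h20 : Real.log 8 + ε ≤ 0.05*L := by linarith
      have hknn : (0:ℝ) ≤ (k:ℝ) := Nat.cast_nonneg k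
      linarith [mul_le_mul_of_nonneg_left h20 hknn]
    have hf2 : gn + 1 ≤ 0.05*(k:ℝ) := by
      rw [hkcast]
      linarith
    have hf2L : (gn + 1)*L ≤ 0.05*((k:ℝ)*L) := by
      linarith [mul_le_mul_of_nonneg_right hf2 hL.le]
    have hexponent : ε*(k:ℝ) + L*gn + (k:ℝ)*(Real.log 8 + L*0.9 - L) ≤ -L := by
      linarith [hf1, hf2L]
    calc E * N^gn * q1^k ≤ Real.exp (ε*(k:ℝ) + L*gn + (k:ℝ)*(Real.log 8 + L*0.9 - L)) := hcomb
      _ ≤ Real.exp (-L) := Real.exp_le_exp.2 hexponent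
      _ = 1/N := by rw [Real.exp_neg, hLdef, Real.exp_log hN0, one_div]
  -- bound the second term by 1/N
  have hq2le2 : q2 ≤ 2 := by
    rw [hq2def, div_le_iff₀ hmpos]
    linarith
  have hT2 : q2^k * ((k:ℝ) * E * δ) ≤ 1/N := by
    have h2k : q2^k ≤ Real.exp ((k:ℝ) * Real.log 2) := by
      calc q2^k ≤ 2^k := pow_le_pow_left₀ hq2nn hq2le2 k
        _ = Real.exp ((k:ℝ) * Real.log 2) := by
            rw [Real.exp_nat_mul, Real.exp_log (by norm_num : (0:ℝ) < 2)]
    have hkexp : (k:ℝ) ≤ Real.exp L := by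
      rw [hLdef, Real.exp_log hN0]
      exact hkN
    have hEk : E = Real.exp (ε*(k:ℝ)) := hEdef
    have hcomb : q2^k * ((k:ℝ) * E * δ) ≤ Real.exp ((k:ℝ)*Real.log 2 + L + ε*(k:ℝ)) * δ := by
      have hs1 : q2^k * ((k:ℝ) * E) ≤ Real.exp ((k:ℝ)*Real.log 2) * (Real.exp L * Real.exp (ε*(k:ℝ))) := by
        have hkE : (k:ℝ) * E ≤ Real.exp L * Real.exp (ε*(k:ℝ)) := by
          rw [← hEk]
          exact mul_le_mul_of_nonneg_right hkexp hEpos.le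
        exact mul_le_mul h2k hkE (mul_nonneg (Nat.cast_nonneg k) hEpos.le) (Real.exp_nonneg _)
      calc q2^k * ((k:ℝ) * E * δ) = (q2^k * ((k:ℝ) * E)) * δ := by ring
        _ ≤ (Real.exp ((k:ℝ)*Real.log 2) * (Real.exp L * Real.exp (ε*(k:ℝ)))) * δ :=
            mul_le_mul_of_nonneg_right hs1 hδ0
        _ = Real.exp ((k:ℝ)*Real.log 2 + L + ε*(k:ℝ)) * δ := by
            rw [Real.exp_add, Real.exp_add]
            ring
    have hlog2 : Real.log 2 ≤ 1 := by
      have := Real.log_le_sub_one_of_pos (by norm_num : (0:ℝ) < 2)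
      linarith
    have hεk25 : (1+ε)*(k:ℝ) ≤ 20.5 * L := by
      have hmul := mul_le_mul_of_nonneg_left hkL hε1.le
      have hid : (ε+1)*(L/(2*(ε+1))) = L/2 := by
        field_simp
      have h40 : 40*(ε+1) ≤ 20*L := by linarith
      linarith [hmul, hid, h40]
    have hexpo2 : (k:ℝ)*Real.log 2 + L + ε*(k:ℝ) ≤ 26*L := by
      have hknn : (0:ℝ) ≤ (k:ℝ) := Nat.cast_nonneg k
      have : (k:ℝ)*Real.log 2 ≤ (k:ℝ) := by
        linarith [mul_le_mul_of_nonneg_left hlog2 hknn]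
      linarith
    have hexp26 : Real.exp (26*L) = N^(26:ℕ) := by
      rw [show (26:ℝ)*L = ((26:ℕ):ℝ)*L by norm_num, Real.exp_nat_mul, hLdef, Real.exp_log hN0]
    have hδpow : N^(26:ℕ) * δ = 1/N := by
      have hNne : N ≠ 0 := hN0.ne'
      have h27 : (1:ℝ)/(n:ℝ)^(27:ℕ) = 1/(N^(26:ℕ) * N) := by
        rw [← pow_succ, hNdef]
      rw [hδdef, h27]
      field_simp
    calc q2^k * ((k:ℝ) * E * δ) ≤ Real.exp ((k:ℝ)*Real.log 2 + L + ε*(k:ℝ)) * δ := hcomb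
      _ ≤ Real.exp (26*L) * δ :=
          mul_le_mul_of_nonneg_right (Real.exp_le_exp.2 hexpo2) hδ0
      _ = 1/N := by rw [hexp26, hδpow]
  -- conclude
  have h2N : 2/N < α := by
    have hid : α * (2/α) = 2 := by field_simp
    have hmul := mul_le_mul_of_nonneg_left h3b hα.le
    rw [div_lt_iff₀ hN0]
    have h1600 : 0 < 1600*α := by positivity
    linarith [hmul, hid, h1600]
  have hsum := add_le_add hT1 hT2
  have h12 : 1/N + 1/N = 2/N := by ring
  have hfin : α ≤ 2/N := by linarith
  linarith

/-- No `(ε, n^{-27})`-SDP mechanism is `α`-useful for the nearby-point problem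
`u^NBP_{τ_n, R_n}` with `τ_n ≤ n^{0.9}` and `|R_n| ≥ 2^n / n^{g(n)}` for `g(n) = o(log n)`,
for all sufficiently large `n`. -/
theorem no_sdp_for_nbp (g : ℕ → ℝ≥0)
    (hg : Filter.Tendsto (fun n : ℕ => (g n : ℝ) / Real.log n) Filter.atTop (nhds 0))
    (ε α : ℝ) (hε : 0 < ε) (hα : 0 < α)
    (τ : ℕ → ℕ) (hτ : ∀ n : ℕ, (τ n : ℝ) ≤ (n : ℝ) ^ (0.9 : ℝ))
    (R : (n : ℕ) → Finset (Fin n → Bool))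
    (hR : ∀ n : ℕ, (2 : ℝ) ^ n / (n : ℝ) ^ ((g n : ℝ)) ≤ ((R n).card : ℝ)) :
    ∃ N : ℕ, ∀ n ≥ N,
      ∀ M : (Fin n → Bool) → PMF (Fin n → Bool),
        IsSDP M ε (1 / (n : ℝ) ^ (27 : ℕ)) →
        ¬ (∀ x : Fin n → Bool,
            α ≤ pr (M x) {y | hammingDist x y ≤ τ n ∨ x ∉ (R n : Set (Fin n → Bool))}) := by
  have hlog : Filter.Tendsto (fun n : ℕ => Real.log n) Filter.atTop Filter.atTop :=
    Real.tendsto_log_atTop.comp tendsto_natCast_atTop_atTop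
  have hcast : Filter.Tendsto (fun n : ℕ => (n:ℝ)) Filter.atTop Filter.atTop :=
    tendsto_natCast_atTop_atTop
  have hc0 : (0:ℝ) < 1/(40*(ε+1)) := by positivity
  have F1 : ∀ᶠ n : ℕ in Filter.atTop, (g n : ℝ) / Real.log n < 1/(40*(ε+1)) :=
    hg.eventually_lt_const hc0
  have F2 : ∀ᶠ n : ℕ in Filter.atTop, 20*(Real.log 8 + ε) ≤ Real.log n :=
    hlog.eventually_ge_atTop _
  have F2b : ∀ᶠ n : ℕ in Filter.atTop, 2*(ε+1) ≤ Real.log n :=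
    hlog.eventually_ge_atTop _
  have F3 : ∀ᶠ n : ℕ in Filter.atTop, (2:ℝ)^(30:ℕ) ≤ (n:ℝ) :=
    hcast.eventually_ge_atTop _
  have F3b : ∀ᶠ n : ℕ in Filter.atTop, 1600 + 2/α ≤ (n:ℝ) :=
    hcast.eventually_ge_atTop _
  obtain ⟨N, hN⟩ := Filter.eventually_atTop.mp (((F1.and F2).and (F2b.and (F3.and F3b))))
  refine ⟨N, fun n hn M hSDP huse => ?_⟩
  obtain ⟨⟨h1, h2⟩, h2b, h3, h3b⟩ := hN n hn
  exact fixed_n n (τ n) ((g n : ℝ)) ε α hε hα (g n).coe_nonneg (R n) (hτ n) (hR n)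
    h1 h2 h2b h3 h3b M hSDP huse
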